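/- On E = Λ^•(ℝ^{2l})* ⊗ S, with E^- := -4 F^- F^- and F^+ as above, the commutation relation [E^-, F^+] = -F^- holds. -/

import Mathlib

open ExteriorAlgebra TensorProduct MvPolynomial

noncomputable section
set_option maxHeartbeats 1000000

/-- Index set for a symplectic basis of `ℝ^{2l}`: `inl i = e_i`, `inr i = e_{i+l}`. -/
abbrev Idx (l : ℕ) := Fin l ⊕ Fin l

/-- Coefficients `ω_{jk} = ω₀(e_j, e_k)` of the standard symplectic form;
with the convention `ω_{jk} ω^{ik} = δ_j^i` one also has `ω^{jk} = ω_{jk}`. -/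
def omg (l : ℕ) : Idx l → Idx l → ℝ
  | Sum.inl a, Sum.inr b => if a = b then 1 else 0
  | Sum.inr a, Sum.inl b => if a = b then -1 else 0
  | Sum.inl _, Sum.inl _ => 0
  | Sum.inr _, Sum.inr _ => 0

/-- The standard symplectic form `ω₀` on `ℝ^{2l}`. -/
def omega0 (l : ℕ) (v w : Idx l → ℝ) : ℝ := ∑ j, ∑ k, omg l j k * v j * w k

/-- The space `Λ^•(ℝ^{2l})^*` of complex(ified) exterior forms, modelled as the
exterior algebra on the span of the dual basis `{ε^k}`. -/
abbrev Forms (l : ℕ) := ExteriorAlgebra ℂ (Idx l → ℂ)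

/-- The dual basis vector `ε^k` as a 1-form. -/
def eps (l : ℕ) (k : Idx l) : Forms l := ExteriorAlgebra.ι ℂ (Pi.single k 1)

/-- Contraction `ι_{e_j}` of exterior forms by the basis vector `e_j`. -/
def ctr (l : ℕ) (j : Idx l) : Forms l →ₗ[ℂ] Forms l :=
  CliffordAlgebra.contractLeft (LinearMap.proj j)

/-- Contraction `ι_v` by a real vector `v ∈ ℝ^{2l}`. -/
def ctrV (l : ℕ) (v : Idx l → ℝ) : Forms l →ₗ[ℂ] Forms l :=
  ∑ j, (v j : ℂ) • ctr l j

section S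
variable {l : ℕ} {S : Type*} [AddCommGroup S] [Module ℂ S]

/-- Clifford multiplication by a real vector `v`, extended from its values
`c k` on the symplectic basis vectors. -/
def clV (l : ℕ) (c : Idx l → S →ₗ[ℂ] S) (v : Idx l → ℝ) : S →ₗ[ℂ] S :=
  ∑ k, (v k : ℂ) • c k

/-- The operator `F⁺(α ⊗ s) = (i/2) Σ_k ε^k ∧ α ⊗ e_k·s` on `Λ^• ⊗ S`. -/
def Fp (l : ℕ) (c : Idx l → S →ₗ[ℂ] S) : Forms l ⊗[ℂ] S →ₗ[ℂ] Forms l ⊗[ℂ] S :=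
  (Complex.I / 2) • ∑ k, TensorProduct.map (LinearMap.mulLeft ℂ (eps l k)) (c k)

/-- The operator `F⁻(α ⊗ s) = (1/2) Σ_{j,k} ω^{jk} ι_{e_j} α ⊗ e_k·s` on `Λ^• ⊗ S`. -/
def Fm (l : ℕ) (c : Idx l → S →ₗ[ℂ] S) : Forms l ⊗[ℂ] S →ₗ[ℂ] Forms l ⊗[ℂ] S :=
  (1 / 2 : ℂ) • ∑ j, ∑ k, (omg l j k : ℂ) • TensorProduct.map (ctr l j) (c k)

end S

/-- The concrete symplectic Clifford multiplication on `S = ℂ[x^1,…,x^l]`: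
`e_i · s = i x^i s` and `e_{i+l} · s = ∂s/∂x^i`. -/
def cPoly (l : ℕ) : Idx l → MvPolynomial (Fin l) ℂ →ₗ[ℂ] MvPolynomial (Fin l) ℂ
  | Sum.inl i => Complex.I • LinearMap.mulLeft ℂ (X i)
  | Sum.inr i => (pderiv i).toLinearMap

namespace CommAux

variable {l : ℕ}

/-- The polynomial module. -/
abbrev S' (l : ℕ) := MvPolynomial (Fin l) ℂ

def cu (l : ℕ) (i : Fin l) : Module.End ℂ (Forms l) := ctr l (Sum.inl i)
def cv (l : ℕ) (i : Fin l) : Module.End ℂ (Forms l) := ctr l (Sum.inr i)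
def cA (l : ℕ) (i : Fin l) : Module.End ℂ (Forms l) := LinearMap.mulLeft ℂ (eps l (Sum.inl i))
def cB (l : ℕ) (i : Fin l) : Module.End ℂ (Forms l) := LinearMap.mulLeft ℂ (eps l (Sum.inr i))
def cp (l : ℕ) (i : Fin l) : Module.End ℂ (S' l) := cPoly l (Sum.inl i)
def cq (l : ℕ) (i : Fin l) : Module.End ℂ (S' l) := cPoly l (Sum.inr i)

/-- Tensor product of endomorphisms, as an endomorphism. -/
def mp (f : Module.End ℂ (Forms l)) (g : Module.End ℂ (S' l)) :
    Module.End ℂ (Forms l ⊗[ℂ] S' l) := TensorProduct.map f g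

lemma mp_mul (f f' : Module.End ℂ (Forms l)) (g g' : Module.End ℂ (S' l)) :
    mp (f * f') (g * g') = mp f g * mp f' g' := by
  simp only [mp, Module.End.mul_eq_comp, TensorProduct.map_comp]

lemma mp_smul_left (c : ℂ) (f : Module.End ℂ (Forms l)) (g : Module.End ℂ (S' l)) :
    mp (c • f) g = c • mp f g := TensorProduct.map_smul_left c f g

lemma mp_smul_right (c : ℂ) (f : Module.End ℂ (Forms l)) (g : Module.End ℂ (S' l)) :
    mp f (c • g) = c • mp f g := TensorProduct.map_smul_right c f g

lemma mp_neg_left (f : Module.End ℂ (Forms l)) (g : Module.End ℂ (S' l)) :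
    mp (-f) g = - mp f g := by
  apply TensorProduct.ext'
  intro x y
  simp [mp, TensorProduct.map_tmul, neg_tmul]

lemma mp_neg_right (f : Module.End ℂ (Forms l)) (g : Module.End ℂ (S' l)) :
    mp f (-g) = - mp f g := by
  apply TensorProduct.ext'
  intro x y
  simp [mp, TensorProduct.map_tmul, tmul_neg]

lemma mp_add_left (f f' : Module.End ℂ (Forms l)) (g : Module.End ℂ (S' l)) :
    mp (f + f') g = mp f g + mp f' g := TensorProduct.map_add_left f f' g

lemma mp_add_right (f : Module.End ℂ (Forms l)) (g g' : Module.End ℂ (S' l)) :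
    mp f (g + g') = mp f g + mp f g' := TensorProduct.map_add_right f g g'

lemma mp_sub_right (f : Module.End ℂ (Forms l)) (g g' : Module.End ℂ (S' l)) :
    mp f (g - g') = mp f g - mp f g' := by
  apply TensorProduct.ext'
  intro x y
  simp [mp, TensorProduct.map_tmul, tmul_sub]

lemma mp_sub_left (f f' : Module.End ℂ (Forms l)) (g : Module.End ℂ (S' l)) :
    mp (f - f') g = mp f g - mp f' g := by
  apply TensorProduct.ext'
  intro x y
  simp [mp, TensorProduct.map_tmul, sub_tmul]

lemma mp_mul_one_left (f f' : Module.End ℂ (Forms l)) (g : Module.End ℂ (S' l)) :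
    mp f 1 * mp f' g = mp (f * f') g := by rw [← mp_mul, one_mul]

lemma mp_mul_one_right (f f' : Module.End ℂ (Forms l)) (g : Module.End ℂ (S' l)) :
    mp f g * mp f' 1 = mp (f * f') g := by rw [← mp_mul, mul_one]

-- exterior relations
lemma ctr_mul_eps (l : ℕ) (j k : Idx l) :
    ctr l j * LinearMap.mulLeft ℂ (eps l k)
      = (if j = k then (1:ℂ) else 0) • (1 : Module.End ℂ (Forms l))
        - LinearMap.mulLeft ℂ (eps l k) * ctr l j := by
  apply LinearMap.ext; intro x
  simp only [Module.End.mul_apply, LinearMap.mulLeft_apply, ctr, eps,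
    LinearMap.sub_apply, LinearMap.smul_apply, Module.End.one_apply]
  rw [CliffordAlgebra.contractLeft_ι_mul]
  simp [Pi.single_apply, eq_comm]

lemma ctr_mul_ctr (l : ℕ) (j k : Idx l) :
    ctr l j * ctr l k = -(ctr l k * ctr l j) := by
  apply LinearMap.ext; intro x
  simp only [Module.End.mul_apply, LinearMap.neg_apply, ctr]
  exact CliffordAlgebra.contractLeft_comm (Q := (0 : QuadraticForm ℂ (Idx l → ℂ)))
    (LinearMap.proj j) (LinearMap.proj k) x

lemma u_mul_A (a b : Fin l) :
    cu l a * cA l b = (if a = b then (1:ℂ) else 0) • 1 - cA l b * cu l a := by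
  have := ctr_mul_eps l (Sum.inl a) (Sum.inl b)
  simp only [Sum.inl.injEq] at this
  exact this

lemma v_mul_A (a b : Fin l) : cv l a * cA l b = -(cA l b * cv l a) := by
  have := ctr_mul_eps l (Sum.inr a) (Sum.inl b)
  simp at this
  exact this

lemma u_mul_B (a b : Fin l) : cu l a * cB l b = -(cB l b * cu l a) := by
  have := ctr_mul_eps l (Sum.inl a) (Sum.inr b)
  simp at this
  exact this

lemma v_mul_B (a b : Fin l) :
    cv l a * cB l b = (if a = b then (1:ℂ) else 0) • 1 - cB l b * cv l a := by
  have := ctr_mul_eps l (Sum.inr a) (Sum.inr b)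
  simp only [Sum.inr.injEq] at this
  exact this

lemma u_mul_u (a b : Fin l) : cu l a * cu l b = -(cu l b * cu l a) :=
  ctr_mul_ctr l _ _

lemma v_mul_v (a b : Fin l) : cv l a * cv l b = -(cv l b * cv l a) :=
  ctr_mul_ctr l _ _

lemma v_mul_u (a b : Fin l) : cv l a * cu l b = -(cu l b * cv l a) :=
  ctr_mul_ctr l _ _

-- polynomial relations
lemma p_mul_q (a b : Fin l) :
    cp l b * cq l a - cq l a * cp l b = (if a = b then -Complex.I else 0) • 1 := by
  apply LinearMap.ext; intro f
  simp only [cp, cq, cPoly, LinearMap.sub_apply, Module.End.mul_apply, LinearMap.smul_apply,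
    LinearMap.mulLeft_apply, Derivation.coeFn_coe, Module.End.one_apply, map_smul]
  rw [pderiv_mul]
  rcases eq_or_ne a b with rfl | hab
  · simp only [pderiv_X, Pi.single_apply, if_pos rfl, smul_add, one_mul, if_true, neg_smul]
    abel
  · simp [pderiv_X, Pi.single_apply, hab, Ne.symm hab]

lemma q_mul_q (a b : Fin l) : cq l a * cq l b = cq l b * cq l a := by
  apply LinearMap.ext; intro f
  simp only [cq, cPoly, Module.End.mul_apply, Derivation.coeFn_coe]
  induction f using MvPolynomial.induction_on with
  | C c => simp [pderiv_C]
  | add p q hp hq => simp only [map_add, hp, hq]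
  | mul_X p n h =>
      simp only [pderiv_mul, map_add, pderiv_X, h, Pi.single_apply]
      split_ifs <;> simp [pderiv_one, h] <;> try ring

lemma p_mul_p (a b : Fin l) : cp l a * cp l b = cp l b * cp l a := by
  apply LinearMap.ext; intro f
  simp only [cp, cPoly, Module.End.mul_apply, LinearMap.smul_apply,
    LinearMap.mulLeft_apply, map_smul]
  rw [mul_left_comm]

-- double-commutator exterior lemmas
lemma uvA (a b : Fin l) :
    cu l a * cv l a * cA l b - cA l b * (cu l a * cv l a)
      = (if a = b then (-1:ℂ) else 0) • cv l a := by
  rw [mul_assoc, v_mul_A,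
    show cu l a * -(cA l b * cv l a) = -(cu l a * (cA l b * cv l a)) from mul_neg (cu l a) (cA l b * cv l a), ← mul_assoc, u_mul_A, sub_mul, smul_mul_assoc, one_mul,
    neg_sub, mul_assoc]
  split_ifs <;> simp <;> exact (neg_one_smul ℂ (cv l a)).symm

lemma uvB (a b : Fin l) :
    cu l a * cv l a * cB l b - cB l b * (cu l a * cv l a)
      = (if a = b then (1:ℂ) else 0) • cu l a := by
  rw [mul_assoc, v_mul_B, mul_sub, mul_smul_comm, mul_one, ← mul_assoc, u_mul_B,
    show -(cB l b * cu l a) * cv l a = -(cB l b * cu l a * cv l a) from neg_mul (cB l b * cu l a) (cv l a),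
    mul_assoc]
  split_ifs <;> simp

-- specialized big-operator helpers for `Module.End` (avoids instance mismatches)
section EndSum
variable {α : Type*} [Fintype α] {V : Type*} [AddCommGroup V] [Module ℂ V]

lemma sum_addE (f g : α → Module.End ℂ V) :
    (∑ a, (f a + g a)) = ∑ a, f a + ∑ a, g a := Finset.sum_add_distrib

lemma sum_subE (f g : α → Module.End ℂ V) :
    (∑ a, (f a - g a)) = ∑ a, f a - ∑ a, g a := Finset.sum_sub_distrib _ _

lemma sum_commE (f : α → α → Module.End ℂ V) :
    ∑ a, ∑ b, f a b = ∑ b, ∑ a, f a b := Finset.sum_comm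

lemma smul_sumE (c : ℂ) (f : α → Module.End ℂ V) :
    (∑ a, c • f a) = c • ∑ a, f a := (Finset.smul_sum).symm

lemma neg_one_smulE (x : Module.End ℂ V) : (-1 : ℂ) • x = -x := neg_one_smul ℂ x

lemma sum_mul_sumE (f g : α → Module.End ℂ V) :
    (∑ a, f a) * (∑ b, g b) = ∑ a, ∑ b, f a * g b := Finset.sum_mul_sum _ _ _ _

lemma smul_smulE (c d : ℂ) (x : Module.End ℂ V) : c • d • x = (c * d) • x := smul_smul c d x

lemma smul_subE (c : ℂ) (x y : Module.End ℂ V) : c • (x - y) = c • x - c • y := smul_sub c x y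

lemma smul_negE (c : ℂ) (x : Module.End ℂ V) : c • (-x) = -(c • x) := smul_neg c x

lemma neg_smulE (c : ℂ) (x : Module.End ℂ V) : (-c) • x = -(c • x) := neg_smul c x

lemma smul_mul_assocE (c : ℂ) (x y : Module.End ℂ V) : (c • x) * y = c • (x * y) :=
  smul_mul_assoc c x y

lemma mul_smul_commE (c : ℂ) (x y : Module.End ℂ V) : x * (c • y) = c • (x * y) :=
  mul_smul_comm c x y

lemma zero_addE (x : Module.End ℂ V) : (0 : Module.End ℂ V) + x = x := zero_add x

lemma zero_subE (x : Module.End ℂ V) : (0 : Module.End ℂ V) - x = -x := zero_sub x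

lemma neg_zeroE : -(0 : Module.End ℂ V) = 0 := neg_zero

lemma sub_mulE (x y z : Module.End ℂ V) : (x - y) * z = x * z - y * z := sub_mul x y z

lemma mul_subE (x y z : Module.End ℂ V) : x * (y - z) = x * y - x * z := mul_sub x y z

lemma fin_sum_ite_eqE {n : ℕ} (a : Fin n) (f : Fin n → Module.End ℂ V) :
    (∑ b : Fin n, if a = b then f b else 0) = f a := Fintype.sum_ite_eq a f

lemma sum_sum_antisymm (f : α → α → Module.End ℂ V) (h : ∀ a b, f a b = - f b a) :
    (∑ a, ∑ b, f a b) = 0 := by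
  have h2 : (∑ a, ∑ b, f a b) = - ∑ a, ∑ b, f a b := by
    conv_lhs => rw [Finset.sum_comm]
    calc (∑ b, ∑ a, f a b) = ∑ b, ∑ a, -(f b a) := by
          refine Finset.sum_congr rfl fun b _ => Finset.sum_congr rfl fun a _ => h a b
      _ = - ∑ a, ∑ b, f a b := by simp
  have h3 : (2:ℂ) • (∑ a, ∑ b, f a b) = 0 := by
    rw [two_smul]; nth_rewrite 1 [h2]; simp
  exact (smul_eq_zero.mp h3).resolve_left (by norm_num)

end EndSum

-- expansions
lemma Fm_expand (l : ℕ) : Fm l (cPoly l) = (1/2 : ℂ) •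
    ∑ i : Fin l, (mp (cu l i) (cq l i) - mp (cv l i) (cp l i)) := by
  rw [Fm]
  congr 1
  rw [Fintype.sum_sum_type]
  have h1 : ∀ a : Fin l,
      (∑ k : Idx l, (omg l (Sum.inl a) k : ℂ) • TensorProduct.map (ctr l (Sum.inl a)) (cPoly l k))
        = mp (cu l a) (cq l a) := by
    intro a
    rw [Fintype.sum_sum_type]
    simp [omg, mp, cu, cq, apply_ite (fun r : ℝ => (r : ℂ)), ite_smul, Finset.sum_ite_eq]
  have h2 : ∀ a : Fin l,
      (∑ k : Idx l, (omg l (Sum.inr a) k : ℂ) • TensorProduct.map (ctr l (Sum.inr a)) (cPoly l k))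
        = - mp (cv l a) (cp l a) := by
    intro a
    rw [Fintype.sum_sum_type]
    simp only [omg, mp, cv, cp, apply_ite (fun r : ℝ => (r : ℂ)), Complex.ofReal_neg,
      Complex.ofReal_one, Complex.ofReal_zero, ite_smul, zero_smul, one_smul,
      Finset.sum_ite_eq, Finset.mem_univ, if_true, Finset.sum_const_zero, zero_add, add_zero]
    rw [neg_one_smulE]
  simp only [h1, h2]
  rw [← Finset.sum_add_distrib]
  refine Finset.sum_congr rfl fun i _ => ?_
  abel

lemma Fp_expand (l : ℕ) : Fp l (cPoly l) = (Complex.I/2) •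
    ∑ i : Fin l, (mp (cA l i) (cp l i) + mp (cB l i) (cq l i)) := by
  rw [Fp]
  congr 1
  rw [Fintype.sum_sum_type, ← Finset.sum_add_distrib]
  rfl

-- the key squared formula
lemma Fm_sq (l : ℕ) : Fm l (cPoly l) * Fm l (cPoly l)
    = (-Complex.I/4) • ∑ i : Fin l, mp (cu l i * cv l i) 1 := by
  rw [Fm_expand, smul_mul_smul_comm, sum_mul_sumE]
  have key : ∀ a b : Fin l,
      (mp (cu l a) (cq l a) - mp (cv l a) (cp l a)) * (mp (cu l b) (cq l b) - mp (cv l b) (cp l b))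
        = mp (cu l a * cu l b) (cq l a * cq l b) + mp (cv l a * cv l b) (cp l a * cp l b)
          - (mp (cu l a * cv l b) (cq l a * cp l b) + mp (cv l a * cu l b) (cp l a * cq l b)) := by
    intro a b
    simp only [sub_mulE, mul_subE, ← mp_mul]
    abel
  simp only [key]
  simp only [sum_subE, sum_addE]
  have z1 : (∑ a : Fin l, ∑ b : Fin l, mp (cu l a * cu l b) (cq l a * cq l b)) = 0 := by
    apply sum_sum_antisymm
    intro a b
    rw [u_mul_u, q_mul_q, mp_neg_left]
  have z2 : (∑ a : Fin l, ∑ b : Fin l, mp (cv l a * cv l b) (cp l a * cp l b)) = 0 := by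
    apply sum_sum_antisymm
    intro a b
    rw [v_mul_v, p_mul_p, mp_neg_left]
  rw [z1, z2]
  have hswap : (∑ a : Fin l, ∑ b : Fin l, mp (cv l a * cu l b) (cp l a * cq l b))
      = ∑ a : Fin l, ∑ b : Fin l, mp (cv l b * cu l a) (cp l b * cq l a) := sum_commE _
  rw [hswap, ← sum_addE]
  have combined : ∀ a : Fin l,
      ((∑ b : Fin l, mp (cu l a * cv l b) (cq l a * cp l b))
        + ∑ b : Fin l, mp (cv l b * cu l a) (cp l b * cq l a))
      = Complex.I • mp (cu l a * cv l a) 1 := by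
    intro a
    rw [← sum_addE]
    have term : ∀ b : Fin l,
        mp (cu l a * cv l b) (cq l a * cp l b) + mp (cv l b * cu l a) (cp l b * cq l a)
          = if a = b then Complex.I • mp (cu l a * cv l b) 1 else 0 := by
      intro b
      rw [v_mul_u, mp_neg_left]
      rw [show mp (cu l a * cv l b) (cq l a * cp l b) + -mp (cu l a * cv l b) (cp l b * cq l a)
          = mp (cu l a * cv l b) (cq l a * cp l b) - mp (cu l a * cv l b) (cp l b * cq l a) from by
        abel]
      rw [← mp_sub_right]
      have hpq : cq l a * cp l b - cp l b * cq l a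
          = -((if a = b then -Complex.I else 0) • 1) := by
        rw [← p_mul_q]; abel
      rw [hpq, mp_neg_right, mp_smul_right]
      split_ifs with h
      · rw [← neg_smulE, neg_neg]
      · rw [zero_smul, neg_zeroE]
    rw [Finset.sum_congr rfl fun b _ => term b, fin_sum_ite_eqE]
  rw [Finset.sum_congr rfl fun a _ => combined a, smul_sumE, zero_addE]
  rw [show ((0 : Module.End ℂ (Forms l ⊗[ℂ] S' l))
      - Complex.I • ∑ i : Fin l, mp (cu l i * cv l i) 1)
      = -(Complex.I • ∑ i : Fin l, mp (cu l i * cv l i) 1) from zero_subE _]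
  rw [smul_negE, smul_smulE, ← neg_smulE]
  congr 1
  ring

-- the exterior commutator step
lemma G_comm_Fp (l : ℕ) :
    (∑ i : Fin l, mp (cu l i * cv l i) 1) * Fp l (cPoly l)
      - Fp l (cPoly l) * (∑ i : Fin l, mp (cu l i * cv l i) 1)
      = Complex.I • Fm l (cPoly l) := by
  rw [Fp_expand, Fm_expand]
  rw [mul_smul_commE, smul_mul_assocE, ← smul_subE, smul_smulE]
  rw [show Complex.I * (1/2 : ℂ) = Complex.I/2 from by ring]
  congr 1
  rw [sum_mul_sumE, sum_mul_sumE,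
    sum_commE (fun b a => (mp (cA l b) (cp l b) + mp (cB l b) (cq l b)) * mp (cu l a * cv l a) 1),
    ← sum_subE]
  refine Finset.sum_congr rfl fun a _ => ?_
  rw [← sum_subE]
  have term2 : ∀ b : Fin l,
      mp (cu l a * cv l a) 1 * (mp (cA l b) (cp l b) + mp (cB l b) (cq l b))
        - (mp (cA l b) (cp l b) + mp (cB l b) (cq l b)) * mp (cu l a * cv l a) 1
      = if a = b then mp (cu l a) (cq l b) - mp (cv l a) (cp l b) else 0 := by
    intro b
    rw [mul_add, add_mul, mp_mul_one_left, mp_mul_one_left, mp_mul_one_right, mp_mul_one_right]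
    rw [show mp (cu l a * cv l a * cA l b) (cp l b) + mp (cu l a * cv l a * cB l b) (cq l b)
          - (mp (cA l b * (cu l a * cv l a)) (cp l b) + mp (cB l b * (cu l a * cv l a)) (cq l b))
        = (mp (cu l a * cv l a * cA l b) (cp l b) - mp (cA l b * (cu l a * cv l a)) (cp l b))
          + (mp (cu l a * cv l a * cB l b) (cq l b) - mp (cB l b * (cu l a * cv l a)) (cq l b))
        from by abel]
    rw [← mp_sub_left, ← mp_sub_left, uvA, uvB, mp_smul_left, mp_smul_left]
    split_ifs with h
    · rw [neg_one_smulE, one_smul]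
      abel
    · rw [zero_smul, zero_smul, zero_addE]
  rw [Finset.sum_congr rfl fun b _ => term2 b, fin_sum_ite_eqE]

end CommAux

open CommAux in
/-- With `E⁻ := -4 F⁻F⁻` on `Λ^•(ℝ^{2l})* ⊗ S`, `S = ℂ[x^1,…,x^l]`, the
commutation relation `[E⁻, F⁺] = -F⁻` holds. -/
theorem commutator_Em_Fp_eq_neg_Fm (l : ℕ) :
    ((-4 : ℂ) • (Fm l (cPoly l) ∘ₗ Fm l (cPoly l))) ∘ₗ Fp l (cPoly l)
      - Fp l (cPoly l) ∘ₗ ((-4 : ℂ) • (Fm l (cPoly l) ∘ₗ Fm l (cPoly l)))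
      = -Fm l (cPoly l) := by
  have hcomp : ∀ (f g : Module.End ℂ (Forms l ⊗[ℂ] S' l)), f ∘ₗ g = f * g := fun _ _ => rfl
  rw [hcomp, hcomp, hcomp, Fm_sq, smul_smulE]
  rw [show (-4 : ℂ) * (-Complex.I/4) = Complex.I from by ring]
  rw [smul_mul_assocE, mul_smul_commE, ← smul_subE, G_comm_Fp, smul_smulE, Complex.I_mul_I,
    neg_one_smulE]

end
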